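/- Let X and Y be proper CAT(0) spaces, f : X → Y a continuous affine map, and α, β asymptotic unit-speed geodesic rays in X. If the rescaling constant ρ(α) = 0 (i.e., f(α) is a single point), then ρ(β) = 0. -/

import Mathlib

def IsUnitSpeedOn {X : Type*} [MetricSpace X] (γ : ℝ → X) (s : Set ℝ) : Prop :=
  ∀ a ∈ s, ∀ b ∈ s, dist (γ a) (γ b) = |a - b|

def GeodesicMetricSpace (X : Type*) [MetricSpace X] : Prop :=
  ∀ x y : X, ∃ γ : ℝ → X, γ 0 = x ∧ γ (dist x y) = y ∧
    IsUnitSpeedOn γ (Set.Icc 0 (dist x y))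

def CAT0Space (X : Type*) [MetricSpace X] : Prop :=
  GeodesicMetricSpace X ∧ ∀ x y m z : X,
    dist x m = dist x y / 2 → dist y m = dist x y / 2 →
    dist z m ^ 2 ≤ dist z x ^ 2 / 2 + dist z y ^ 2 / 2 - dist x y ^ 2 / 4

lemma cat0_mid_common {X : Type*} [MetricSpace X]
    (h4 : ∀ x y m z : X, dist x m = dist x y / 2 → dist y m = dist x y / 2 →
      dist z m ^ 2 ≤ dist z x ^ 2 / 2 + dist z y ^ 2 / 2 - dist x y ^ 2 / 4)
    (o y1 y2 m1 m2 : X)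
    (h11 : dist o m1 = dist o y1 / 2) (h12 : dist y1 m1 = dist o y1 / 2)
    (h21 : dist o m2 = dist o y2 / 2) (h22 : dist y2 m2 = dist o y2 / 2) :
    dist m1 m2 ≤ dist y1 y2 / 2 := by
  have A := h4 o y2 m2 m1 h21 h22
  have B := h4 o y1 m1 y2 h11 h12
  rw [dist_comm m1 o, h11, dist_comm m1 y2] at A
  rw [dist_comm y2 o, dist_comm y2 y1] at B
  have h2 : dist m1 m2 ^ 2 ≤ (dist y1 y2 / 2) ^ 2 := by nlinarith [A, B]
  nlinarith [dist_nonneg (x := m1) (y := m2), dist_nonneg (x := y1) (y := y2), h2]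

lemma cat0_mid_general {X : Type*} [MetricSpace X] (hX : CAT0Space X)
    (x1 y1 x2 y2 m1 m2 : X)
    (h11 : dist x1 m1 = dist x1 y1 / 2) (h12 : dist y1 m1 = dist x1 y1 / 2)
    (h21 : dist x2 m2 = dist x2 y2 / 2) (h22 : dist y2 m2 = dist x2 y2 / 2) :
    dist m1 m2 ≤ (dist x1 x2 + dist y1 y2) / 2 := by
  obtain ⟨γ, hg0, hgD, hgu⟩ := hX.1 x2 y1
  set d := dist x2 y1 with hd
  have hd0 : 0 ≤ d := dist_nonneg
  have hmem0 : (0:ℝ) ∈ Set.Icc 0 d := ⟨le_refl _, hd0⟩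
  have hmemh : d/2 ∈ Set.Icc 0 d := ⟨by linarith, by linarith⟩
  have hmemd : d ∈ Set.Icc 0 d := ⟨hd0, le_refl _⟩
  set m := γ (d/2) with hm
  have hx2m : dist x2 m = d / 2 := by
    have h := hgu 0 hmem0 (d/2) hmemh
    rw [hg0] at h
    rw [h, abs_of_nonpos (by linarith : (0:ℝ) - d/2 ≤ 0)]; ring
  have hy1m : dist y1 m = d / 2 := by
    have h := hgu d hmemd (d/2) hmemh
    rw [hgD] at h
    rw [h, abs_of_nonneg (by linarith : (0:ℝ) ≤ d - d/2)]; ring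
  have h1 : dist m1 m ≤ dist x1 x2 / 2 := by
    refine cat0_mid_common hX.2 y1 x1 x2 m1 m ?_ ?_ ?_ ?_
    · rw [dist_comm y1 x1]; exact h12
    · rw [dist_comm y1 x1]; exact h11
    · rw [dist_comm y1 x2, ← hd]; exact hy1m
    · rw [dist_comm y1 x2, ← hd]; exact hx2m
  have h2 : dist m m2 ≤ dist y1 y2 / 2 := by
    refine cat0_mid_common hX.2 x2 y1 y2 m m2 ?_ ?_ h21 h22
    · rw [← hd]; exact hx2m
    · rw [← hd]; exact hy1m
  calc dist m1 m2 ≤ dist m1 m + dist m m2 := dist_triangle _ _ _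
    _ ≤ (dist x1 x2 + dist y1 y2) / 2 := by linarith

lemma dyadic_convex {X : Type*} [MetricSpace X] (hX : CAT0Space X)
    (γ1 γ2 : ℝ → X) (D : ℝ) (hD : 0 ≤ D)
    (h1 : IsUnitSpeedOn γ1 (Set.Icc 0 D)) (h2 : IsUnitSpeedOn γ2 (Set.Icc 0 D))
    (h00 : γ1 0 = γ2 0) :
    ∀ m k : ℕ, k ≤ 2 ^ m →
      dist (γ1 ((k : ℝ) * D / 2 ^ m)) (γ2 ((k : ℝ) * D / 2 ^ m)) ≤
        ((k : ℝ) / 2 ^ m) * dist (γ1 D) (γ2 D) := by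
  intro m
  induction m with
  | zero =>
    intro k hk
    interval_cases k
    · simp [h00]
    · simp
  | succ m ih =>
    intro k hk
    have hpow : (2:ℕ) ^ (m+1) = 2 * 2 ^ m := by ring
    rcases Nat.even_or_odd k with ⟨j, hj⟩ | ⟨j, hj⟩
    · subst hj
      have hj2 : j ≤ 2 ^ m := by omega
      have e1 : ((j + j : ℕ) : ℝ) * D / 2 ^ (m+1) = (j : ℝ) * D / 2 ^ m := by
        push_cast; ring
      have e2 : ((j + j : ℕ) : ℝ) / 2 ^ (m+1) = (j : ℝ) / 2 ^ m := by
        push_cast; ring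
      rw [e1, e2]
      exact ih j hj2
    · subst hj
      have hj2 : j + 1 ≤ 2 ^ m := by omega
      have hpm : (0:ℝ) < 2 ^ m := by positivity
      have hjR : (j : ℝ) ≤ 2 ^ m := by
        exact_mod_cast le_trans (Nat.le_succ j) hj2
      have hj1R : (j : ℝ) + 1 ≤ 2 ^ m := by exact_mod_cast hj2
      set a : ℝ := (j : ℝ) * D / 2 ^ m with ha
      set b : ℝ := ((j : ℝ) + 1) * D / 2 ^ m with hb
      set u : ℝ := ((2 * j + 1 : ℕ) : ℝ) * D / 2 ^ (m+1) with hu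
      have huab : u = (a + b) / 2 := by rw [hu, ha, hb]; push_cast; ring
      have hab : a ≤ b := by
        rw [ha, hb, div_le_div_iff₀ hpm hpm]
        nlinarith [mul_nonneg hD hpm.le]
      have ha0 : 0 ≤ a := by positivity
      have hbD : b ≤ D := by
        rw [hb, div_le_iff₀ hpm]
        nlinarith [mul_nonneg hD hpm.le]
      have hma : a ∈ Set.Icc 0 D := ⟨ha0, le_trans hab hbD⟩
      have hmb : b ∈ Set.Icc 0 D := ⟨le_trans ha0 hab, hbD⟩
      have hmu : u ∈ Set.Icc 0 D := by
        constructor <;> rw [huab] <;> [linarith; linarith]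
      have key : dist (γ1 u) (γ2 u) ≤ (dist (γ1 a) (γ2 a) + dist (γ1 b) (γ2 b)) / 2 := by
        refine cat0_mid_general hX (γ1 a) (γ1 b) (γ2 a) (γ2 b) (γ1 u) (γ2 u) ?_ ?_ ?_ ?_
        · rw [h1 a hma u hmu, h1 a hma b hmb,
            abs_of_nonpos (by linarith [huab] : a - u ≤ 0),
            abs_of_nonpos (by linarith : a - b ≤ 0)]
          rw [huab]; ring
        · rw [h1 b hmb u hmu, h1 a hma b hmb,
            abs_of_nonneg (by linarith [huab] : (0:ℝ) ≤ b - u),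
            abs_of_nonpos (by linarith : a - b ≤ 0)]
          rw [huab]; ring
        · rw [h2 a hma u hmu, h2 a hma b hmb,
            abs_of_nonpos (by linarith [huab] : a - u ≤ 0),
            abs_of_nonpos (by linarith : a - b ≤ 0)]
          rw [huab]; ring
        · rw [h2 b hmb u hmu, h2 a hma b hmb,
            abs_of_nonneg (by linarith [huab] : (0:ℝ) ≤ b - u),
            abs_of_nonpos (by linarith : a - b ≤ 0)]
          rw [huab]; ring
      have iha := ih j (le_trans (Nat.le_succ j) hj2)
      rw [← ha] at iha
      have ihb := ih (j+1) hj2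
      have eb : ((j + 1 : ℕ) : ℝ) * D / 2 ^ m = b := by rw [hb]; push_cast; ring
      rw [eb] at ihb
      have ecoef : ((2 * j + 1 : ℕ) : ℝ) / 2 ^ (m+1) * dist (γ1 D) (γ2 D) =
          ((j : ℝ) / 2 ^ m * dist (γ1 D) (γ2 D) +
           ((j + 1 : ℕ) : ℝ) / 2 ^ m * dist (γ1 D) (γ2 D)) / 2 := by
        push_cast; ring
      rw [ecoef]
      linarith [iha, ihb]

lemma geodesic_convex_pt {X : Type*} [MetricSpace X] (hX : CAT0Space X)
    (γ1 γ2 : ℝ → X) (D : ℝ) (hD : 0 < D)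
    (h1 : IsUnitSpeedOn γ1 (Set.Icc 0 D)) (h2 : IsUnitSpeedOn γ2 (Set.Icc 0 D))
    (h00 : γ1 0 = γ2 0) (t : ℝ) (ht : t ∈ Set.Icc 0 D) :
    dist (γ1 t) (γ2 t) ≤ t / D * dist (γ1 D) (γ2 D) := by
  refine le_of_forall_pos_le_add (fun ε hε => ?_)
  obtain ⟨m, hm⟩ : ∃ m : ℕ, 2 * D / ε < 2 ^ m :=
    pow_unbounded_of_one_lt (y := (2:ℝ)) (2 * D / ε) one_lt_two
  have hpm : (0:ℝ) < 2 ^ m := by positivity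
  set k : ℕ := ⌊t * 2 ^ m / D⌋₊ with hk
  have htm0 : 0 ≤ t * 2 ^ m / D := div_nonneg (mul_nonneg ht.1 hpm.le) hD.le
  have hkle : (k : ℝ) ≤ t * 2 ^ m / D := Nat.floor_le htm0
  have hklt : t * 2 ^ m / D < (k : ℝ) + 1 := Nat.lt_floor_add_one _
  have hk2m : k ≤ 2 ^ m := by
    have hle : t * 2 ^ m / D ≤ ((2 ^ m : ℕ) : ℝ) := by
      push_cast
      rw [div_le_iff₀ hD]
      nlinarith [ht.2, hpm.le]
    calc k ≤ ⌊((2 ^ m : ℕ) : ℝ)⌋₊ := Nat.floor_le_floor hle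
      _ = 2 ^ m := Nat.floor_natCast _
  set u : ℝ := (k : ℝ) * D / 2 ^ m with hu
  have hu0 : 0 ≤ u := by positivity
  have hut : u ≤ t := by
    rw [hu, div_le_iff₀ hpm]
    calc (k : ℝ) * D ≤ (t * 2 ^ m / D) * D := by nlinarith [hD.le]
      _ = t * 2 ^ m := by field_simp
  have htu : t - u < D / 2 ^ m := by
    rw [hu]
    rw [div_lt_iff₀ hD] at hklt
    rw [sub_lt_iff_lt_add, ← add_div, lt_div_iff₀ hpm]
    nlinarith [hklt]
  have hmu : u ∈ Set.Icc 0 D := ⟨hu0, le_trans hut ht.2⟩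
  have hdy := dyadic_convex hX γ1 γ2 D hD.le h1 h2 h00 m k hk2m
  rw [← hu] at hdy
  have hcoef : (k : ℝ) / 2 ^ m ≤ t / D := by
    have he : (k : ℝ) / 2 ^ m = u / D := by
      rw [hu]; field_simp
    rw [he]
    gcongr
  have hE : 0 ≤ dist (γ1 D) (γ2 D) := dist_nonneg
  have hdy2 : dist (γ1 u) (γ2 u) ≤ t / D * dist (γ1 D) (γ2 D) :=
    le_trans hdy (mul_le_mul_of_nonneg_right hcoef hE)
  have d1 : dist (γ1 t) (γ1 u) = t - u := by
    rw [h1 t ht u hmu, abs_of_nonneg (by linarith : (0:ℝ) ≤ t - u)]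
  have d2 : dist (γ2 u) (γ2 t) = t - u := by
    rw [h2 u hmu t ht, abs_of_nonpos (by linarith : u - t ≤ 0)]; ring
  have heps : 2 * (t - u) < ε := by
    rw [div_lt_iff₀ hε] at hm
    rw [lt_div_iff₀ hpm] at htu
    nlinarith [hε, hpm]
  calc dist (γ1 t) (γ2 t) ≤ dist (γ1 t) (γ1 u) + dist (γ1 u) (γ2 u) + dist (γ2 u) (γ2 t) :=
        dist_triangle4 _ _ _ _
    _ ≤ t / D * dist (γ1 D) (γ2 D) + ε := by
        rw [d1, d2]; linarith

/-- An affine map: every unit-speed geodesic segment is mapped to a geodesic segment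
traversed at some constant speed `ρ ≥ 0` (depending on the segment). -/
def IsAffineMap {X Y : Type*} [MetricSpace X] [MetricSpace Y] (f : X → Y) : Prop :=
  ∀ (γ : ℝ → X) (L : ℝ), 0 ≤ L → IsUnitSpeedOn γ (Set.Icc 0 L) →
    ∃ ρ : ℝ, 0 ≤ ρ ∧ ∀ a ∈ Set.Icc (0:ℝ) L, ∀ b ∈ Set.Icc (0:ℝ) L,
      dist (f (γ a)) (f (γ b)) = ρ * |a - b|

/-- Let `f : X → Y` be a continuous affine map between proper CAT(0)
spaces and let `α, β` be asymptotic unit-speed geodesic rays in `X`.  If `f` collapses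
`α` to a point (`ρ(α) = 0`), then `f` collapses `β` to a point (`ρ(β) = 0`). -/
theorem collapsed_ray_asymptotic {X Y : Type*} [MetricSpace X] [MetricSpace Y]
    [ProperSpace X] [ProperSpace Y] (hX : CAT0Space X) (hY : CAT0Space Y)
    (f : X → Y) (hfc : Continuous f) (hfa : IsAffineMap f)
    (α β : ℝ → X)
    (hα : IsUnitSpeedOn α (Set.Ici 0)) (hβ : IsUnitSpeedOn β (Set.Ici 0))
    (hasymp : ∃ C : ℝ, ∀ t ∈ Set.Ici (0:ℝ), dist (α t) (β t) ≤ C)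
    (h0 : ∀ t ∈ Set.Ici (0:ℝ), f (α t) = f (α 0)) :
    ∀ t ∈ Set.Ici (0:ℝ), f (β t) = f (β 0) := by
  obtain ⟨C, hC⟩ := hasymp
  have mem0 : (0:ℝ) ∈ Set.Ici (0:ℝ) := Set.self_mem_Ici
  have hC0 : 0 ≤ C := le_trans dist_nonneg (hC 0 mem0)
  set c0 : ℝ := dist (f (α 0)) (f (β 0)) with hc0
  have hc00 : 0 ≤ c0 := dist_nonneg
  intro t ht
  rw [Set.mem_Ici] at ht
  rw [← dist_eq_zero]
  have key : ∀ ε > 0, dist (f (β t)) (f (β 0)) ≤ ε := by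
    intro ε hε
    obtain ⟨δ, hδ0, hδ⟩ := Metric.continuous_iff.mp hfc (β t) (ε/2) (by linarith)
    set n : ℝ := C + 1 + t + 2*C*t/δ + 2*c0*t/ε with hn
    have hn0 : 0 ≤ n := by positivity
    have hnmem : n ∈ Set.Ici (0:ℝ) := hn0
    set D : ℝ := dist (β 0) (α n) with hD
    have hαn : dist (α 0) (α n) = n := by
      rw [hα 0 mem0 n hnmem, abs_of_nonpos (by linarith : (0:ℝ) - n ≤ 0)]; ring
    have hDlow : n - C ≤ D := by
      have h1 : dist (α 0) (α n) ≤ dist (α 0) (β 0) + dist (β 0) (α n) := dist_triangle _ _ _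
      have h2 : dist (α 0) (β 0) ≤ C := hC 0 mem0
      rw [hαn] at h1; rw [hD]; linarith
    have hDhigh : D ≤ n + C := by
      have h1 : dist (β 0) (α n) ≤ dist (β 0) (α 0) + dist (α 0) (α n) := dist_triangle _ _ _
      rw [hαn, dist_comm (β 0) (α 0)] at h1
      rw [hD]; linarith [hC 0 mem0]
    have hDbig : 1 + t + 2*C*t/δ + 2*c0*t/ε ≤ D := by rw [hn] at hDlow; linarith
    have haux : (0:ℝ) < 1 + t + 2*C*t/δ + 2*c0*t/ε := by positivity
    have hDpos : 0 < D := by linarith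
    have htD : t ≤ D := by
      have h1 : 0 ≤ 2*C*t/δ := by positivity
      have h2 : 0 ≤ 2*c0*t/ε := by positivity
      linarith
    -- the geodesic from β 0 to α n
    obtain ⟨γ, hγ0, hγD, hγu⟩ := hX.1 (β 0) (α n)
    rw [← hD] at hγD hγu
    have hβu : IsUnitSpeedOn β (Set.Icc 0 D) := by
      intro a ha b hb
      exact hβ a ha.1 b hb.1
    have htmem : t ∈ Set.Icc 0 D := ⟨ht, htD⟩
    -- endpoint distance bound
    have hDmem : D ∈ Set.Ici (0:ℝ) := hDpos.le
    have hβnD : dist (β n) (β D) = |n - D| := hβ n hnmem D hDmem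
    have hend : dist (γ D) (β D) ≤ 2*C := by
      rw [hγD]
      calc dist (α n) (β D) ≤ dist (α n) (β n) + dist (β n) (β D) := dist_triangle _ _ _
        _ ≤ C + |n - D| := by
            refine add_le_add (hC n hnmem) ?_
            rw [hβnD]
        _ ≤ C + C := by
            refine add_le_add le_rfl (abs_le.mpr ⟨by linarith, by linarith⟩)
        _ = 2*C := by ring
    -- convexity: γ t is close to β t
    have hconv := geodesic_convex_pt hX γ β D hDpos hγu hβu hγ0 t htmem
    have hclose : dist (γ t) (β t) < δ := by
      have h1 : t / D * dist (γ D) (β D) ≤ t / D * (2*C) :=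
        mul_le_mul_of_nonneg_left hend (by positivity)
      have h2 : t / D * (2*C) < δ := by
        rw [div_mul_eq_mul_div, div_lt_iff₀ hDpos]
        have hnn2 : 0 ≤ 2*c0*t/ε := by positivity
        have : 2*C*t/δ < D := by linarith
        rw [div_lt_iff₀ hδ0] at this
        nlinarith
      linarith
    have hfar : dist (f (γ t)) (f (β t)) < ε/2 := by
      have := hδ (γ t) hclose
      linarith [this]
    -- affine property on γ
    obtain ⟨ρ, hρ0, hρ⟩ := hfa γ D hDpos.le hγu
    have hρD := hρ D ⟨hDpos.le, le_refl D⟩ 0 ⟨le_refl 0, hDpos.le⟩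
    have hρval : ρ * D = c0 := by
      rw [hc0, ← h0 n hnmem, ← hγD, ← hγ0, hρD,
        abs_of_nonneg (show (0:ℝ) ≤ D - 0 by linarith)]
      ring
    have hρt := hρ t htmem 0 ⟨le_refl 0, hDpos.le⟩
    rw [hγ0, abs_of_nonneg (show (0:ℝ) ≤ t - 0 by linarith)] at hρt
    have hρtsmall : ρ * (t - 0) < ε/2 := by
      have hnn1 : 0 ≤ 2*C*t/δ := by positivity
      have hc0t : 2*c0*t/ε < D := by linarith
      rw [div_lt_iff₀ hε] at hc0t
      nlinarith [hρval, hρ0, hDpos, hε, ht]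
    have hmid : dist (f (γ t)) (f (β 0)) < ε/2 := by rw [hρt]; linarith
    calc dist (f (β t)) (f (β 0)) ≤ dist (f (β t)) (f (γ t)) + dist (f (γ t)) (f (β 0)) :=
          dist_triangle _ _ _
      _ ≤ ε := by rw [dist_comm (f (β t)) (f (γ t))]; linarith
  have hle : dist (f (β t)) (f (β 0)) ≤ 0 :=
    le_of_forall_pos_le_add (fun ε hε => by linarith [key ε hε])
  linarith [dist_nonneg (x := f (β t)) (y := f (β 0))]
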